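/- Let G be a finite simple graph and A ⊆ V(G) with cut-rank r = ρ_G(A) ≥ 1. Then U_G(A) ≤ r · 2^{(r² + 5r)/4} (as an inequality of real numbers); equivalently β_G(A) ≤ ρ_G(A)²/4 + 5ρ_G(A)/4 + log₂ ρ_G(A). Together with ρ_G(A) ≤ U_G(A) this is the per-cut form of the inequality log rw(G) ≤ βw(G) ≤ rw(G)²/4 + 5rw(G)/4 + log rw(G). -/

import Mathlib

open Submodule FiniteDimensional Module

section AuxCount

variable {K : Type*} [Field K] {ι : Type*} [Fintype ι] [DecidableEq ι]

/-- restriction to coordinates in `P` -/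
noncomputable def projOn (P : Finset ι) : (ι → K) →ₗ[K] (↥P → K) :=
  LinearMap.funLeft K K Subtype.val

/-- Every subspace of `ι → K` is the graph of a linear map over some coordinate set. -/
lemma exists_graph (W : Submodule K (ι → K)) :
    ∃ (P : Finset ι) (φ : (↥P → K) →ₗ[K] (↥(Pᶜ) → K)),
      W = LinearMap.ker (projOn (Pᶜ) - φ ∘ₗ projOn P) := by
  classical
  set k := finrank K W with hk
  -- coordinate functionals on W
  set ε : ι → Module.Dual K ↥W := fun j => (LinearMap.proj j) ∘ₗ W.subtype with hε
  set T : Submodule K (Module.Dual K ↥W) := span K (Set.range ε) with hT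
  have hTco : T.dualCoannihilator = ⊥ := by
    rw [eq_bot_iff]
    intro w hw
    rw [Submodule.mem_dualCoannihilator] at hw
    have h0 : ∀ j, (w : ι → K) j = 0 := fun j => hw (ε j) (subset_span ⟨j, rfl⟩)
    exact (Submodule.mem_bot K).mpr (Subtype.ext (funext h0))
  have hTfin : finrank K T = k := by
    have := Subspace.finrank_add_finrank_dualCoannihilator_eq T
    rw [hTco, finrank_bot] at this
    simpa using this
  obtain ⟨s, hs_sub, hs_span, hs_ind⟩ := exists_linearIndependent K (Set.range ε)
  have hs_fin : s.Finite := hs_ind.setFinite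
  haveI := hs_fin.fintype
  have hs_card : s.toFinset.card = k := by
    rw [← finrank_span_set_eq_card hs_ind, hs_span, ← hT, hTfin]
  -- choose an index for each functional in s
  have hchoice : ∀ f : ↥s, ∃ j, ε j = ↑f := fun f => hs_sub f.2
  choose g hg using hchoice
  have hginj : Function.Injective g := by
    intro f1 f2 hgf
    have : ε (g f1) = ε (g f2) := by rw [hgf]
    rw [hg f1, hg f2] at this
    exact Subtype.ext this
  set P : Finset ι := Finset.univ.image g with hP
  have hPcard : P.card = k := by
    rw [hP, Finset.card_image_of_injective _ hginj, Finset.card_univ, ← Set.toFinset_card,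
      hs_card]
  -- the restriction to P, on W
  set ρ : ↥W →ₗ[K] (↥P → K) := (projOn P) ∘ₗ W.subtype with hρ
  have hρinj : Function.Injective ρ := by
    rw [← LinearMap.ker_eq_bot, eq_bot_iff]
    intro w hw
    rw [LinearMap.mem_ker] at hw
    -- all functionals in T vanish on w
    have hsvanish : ∀ f ∈ T, f w = 0 := by
      intro f hf
      have hsub : s ⊆ (LinearMap.ker ((LinearMap.applyₗ w) :
          Module.Dual K ↥W →ₗ[K] K) : Set (Module.Dual K ↥W)) := by
        intro f' hf'
        have hj : g ⟨f', hf'⟩ ∈ P := Finset.mem_image.mpr ⟨⟨f', hf'⟩, Finset.mem_univ _, rfl⟩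
        have h0 : ε (g ⟨f', hf'⟩) w = 0 := by
          have := congrFun hw ⟨g ⟨f', hf'⟩, hj⟩
          exact this
        rw [hg ⟨f', hf'⟩] at h0
        simpa [LinearMap.mem_ker] using h0
      have : T ≤ LinearMap.ker ((LinearMap.applyₗ w) : Module.Dual K ↥W →ₗ[K] K) := by
        rw [hT, ← hs_span]
        exact span_le.mpr hsub
      exact this hf
    have h0 : ∀ j, (w : ι → K) j = 0 := fun j => hsvanish (ε j) (subset_span ⟨j, rfl⟩)
    exact (Submodule.mem_bot K).mpr (Subtype.ext (funext h0))
  have hfr : finrank K ↥W = finrank K (↥P → K) := by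
    rw [finrank_fintype_fun_eq_card, Fintype.card_coe, hPcard]
  have hρsurj : Function.Surjective ρ :=
    (LinearMap.injective_iff_surjective_of_finrank_eq_finrank hfr).mp hρinj
  set e : ↥W ≃ₗ[K] (↥P → K) := LinearEquiv.ofBijective ρ ⟨hρinj, hρsurj⟩ with he
  set φ : (↥P → K) →ₗ[K] (↥(Pᶜ) → K) :=
    ((projOn (Pᶜ)) ∘ₗ W.subtype) ∘ₗ (e.symm : (↥P → K) →ₗ[K] ↥W) with hφ
  refine ⟨P, φ, le_antisymm ?_ ?_⟩
  · intro v hv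
    rw [LinearMap.mem_ker]
    have hsymm : e.symm (ρ ⟨v, hv⟩) = ⟨v, hv⟩ := e.symm_apply_apply ⟨v, hv⟩
    have : φ (projOn P v) = projOn (Pᶜ) v := by
      have hρv : ρ ⟨v, hv⟩ = projOn P v := rfl
      rw [hφ]
      simp only [LinearMap.coe_comp, Function.comp_apply, LinearEquiv.coe_coe]
      rw [← hρv, hsymm]
      rfl
    simp [LinearMap.sub_apply, this]
  · intro v hv
    rw [LinearMap.mem_ker, LinearMap.sub_apply, sub_eq_zero] at hv
    set w : ↥W := e.symm (projOn P v) with hw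
    have h1 : ρ w = projOn P v := e.apply_symm_apply (projOn P v)
    have h2 : projOn (Pᶜ) (w : ι → K) = φ (projOn P v) := rfl
    have hvw : v = (w : ι → K) := by
      funext j
      by_cases hj : j ∈ P
      · exact (congrFun h1 ⟨j, hj⟩).symm
      · have hj' : j ∈ Pᶜ := Finset.mem_compl.mpr hj
        have hv' : projOn (Pᶜ) v = φ (projOn P v) := by simpa using hv
        have := congrFun (hv'.trans h2.symm) ⟨j, hj'⟩
        exact this
    rw [hvw]
    exact w.2

instance fintSubmodulePi [Finite K] : Finite (Submodule K (ι → K)) :=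
  Finite.of_injective (fun W => (W : Set (ι → K))) SetLike.coe_injective

/-- The number of subspaces of `K^ι` is at most `2^r * |K|^(r²/4)` where `r = |ι|`. -/
lemma card_submodule_le [Fintype K] [DecidableEq K] :
    Nat.card (Submodule K (ι → K)) ≤
      2 ^ (Fintype.card ι) * Fintype.card K ^ (Fintype.card ι ^ 2 / 4) := by
  classical
  set r := Fintype.card ι with hra
  -- injection into sigma type of matrices
  set γ : (Σ P : Finset ι, Matrix ↥(Pᶜ) ↥P K) → Submodule K (ι → K) :=
    fun x => LinearMap.ker (projOn (x.1ᶜ) - (Matrix.toLin' x.2) ∘ₗ projOn x.1) with hγ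
  have hsurj : Function.Surjective γ := by
    intro W
    obtain ⟨P, φ, hW⟩ := exists_graph W
    exact ⟨⟨P, LinearMap.toMatrix' φ⟩, by
      rw [hγ]; simp only [Matrix.toLin'_toMatrix']; exact hW.symm⟩
  have h1 : Nat.card (Submodule K (ι → K)) ≤
      Nat.card (Σ P : Finset ι, Matrix ↥(Pᶜ) ↥P K) :=
    Nat.card_le_card_of_surjective γ hsurj
  refine h1.trans ?_
  rw [Nat.card_eq_fintype_card, Fintype.card_sigma]
  have hbound : ∀ P : Finset ι, Fintype.card (Matrix ↥(Pᶜ) ↥P K) ≤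
      Fintype.card K ^ (r ^ 2 / 4) := by
    intro P
    have hcard : Fintype.card (Matrix ↥(Pᶜ) ↥P K) =
        Fintype.card K ^ (Pᶜ.card * P.card) := by
      have : Fintype.card (Matrix ↥(Pᶜ) ↥P K) = Fintype.card (↥(Pᶜ) → ↥P → K) := rfl
      rw [this, Fintype.card_fun, Fintype.card_fun, ← pow_mul, Fintype.card_coe,
        Fintype.card_coe, mul_comm (P.card)]
    rw [hcard]
    refine pow_le_pow_right₀ Fintype.one_lt_card.le ?_
    have hk : P.card ≤ r := Finset.card_le_card (Finset.subset_univ P) |>.trans (by simp [hra])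
    have hcompl : Pᶜ.card = r - P.card := by rw [Finset.card_compl, hra]
    rw [Nat.le_div_iff_mul_le (by norm_num)]
    rw [hcompl]
    set a := P.card
    set b := r - a
    have hr' : r = b + a := by omega
    have h2 : b * a * 4 ≤ (b + a) ^ 2 := by nlinarith [two_mul_le_add_sq b a]
    calc b * a * 4 ≤ (b + a) ^ 2 := h2
    _ = r ^ 2 := by rw [← hr']
  calc ∑ P : Finset ι, Fintype.card (Matrix ↥(Pᶜ) ↥P K)
      ≤ ∑ _P : Finset ι, Fintype.card K ^ (r ^ 2 / 4) := Finset.sum_le_sum fun P _ => hbound P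
    _ = 2 ^ r * Fintype.card K ^ (r ^ 2 / 4) := by
        rw [Finset.sum_const, Finset.card_univ, Fintype.card_finset, smul_eq_mul, hra]

end AuxCount

open Classical in
/-- The cut matrix of `A`: rows indexed by `A`, columns by its complement, over GF(2),
with `(x,y)` entry `1` iff `x` and `y` are adjacent. -/
noncomputable def cutMatrix {V : Type*} [Fintype V] [DecidableEq V]
    (G : SimpleGraph V) (A : Finset V) : Matrix ↥A ↥(Aᶜ) (ZMod 2) :=
  Matrix.of fun x y => if G.Adj x.1 y.1 then 1 else 0

/-- The cut-rank `ρ_G(A)`: the GF(2)-rank of the cut matrix of `A`. -/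
noncomputable def cutRank {V : Type*} [Fintype V] [DecidableEq V]
    (G : SimpleGraph V) (A : Finset V) : ℕ :=
  (cutMatrix G A).rank

/-- The union-count `U_G(A)`: the number of distinct sets `N(Y) \ A` over `Y ⊆ A`. -/
noncomputable def unionCount {V : Type*} [Fintype V] [DecidableEq V]
    (G : SimpleGraph V) (A : Finset V) : ℕ :=
  Set.ncard {S : Set V | ∃ Y : Set V, Y ⊆ ↑A ∧ (⋃ y ∈ Y, G.neighborSet y) \ ↑A = S}

/-- `nss_G(A)`: the number of distinct GF(2)-linear spans of subsets of rows of the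
cut matrix of `A`. -/
noncomputable def nss {V : Type*} [Fintype V] [DecidableEq V]
    (G : SimpleGraph V) (A : Finset V) : ℕ :=
  Set.ncard {W : Submodule (ZMod 2) (↥(Aᶜ) → ZMod 2) |
    ∃ S : Set ↥A, W = Submodule.span (ZMod 2) ((fun x => cutMatrix G A x) '' S)}

section MainAux

variable {V : Type*} [Fintype V] [DecidableEq V]

lemma unionCount_le_nss (G : SimpleGraph V) (A : Finset V) :
    unionCount G A ≤ nss G A := by
  classical
  set K := ZMod 2
  set M : Matrix ↥A ↥(Aᶜ) K := cutMatrix G A with hM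
  set spans : Set (Submodule K (↥(Aᶜ) → K)) :=
    {W | ∃ S : Set ↥A, W = Submodule.span K ((fun x => M x) '' S)} with hspans
  set u : Submodule K (↥(Aᶜ) → K) → Set V :=
    fun W => {v | ∃ h : v ∈ Aᶜ, ∃ w ∈ W, w ⟨v, h⟩ ≠ 0} with hu
  have key : {S : Set V | ∃ Y : Set V, Y ⊆ ↑A ∧ (⋃ y ∈ Y, G.neighborSet y) \ ↑A = S}
      ⊆ u '' spans := by
    rintro S ⟨Y, hY, rfl⟩
    set S' : Set ↥A := {x | (x : V) ∈ Y} with hS'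
    refine ⟨Submodule.span K ((fun x => M x) '' S'), ⟨S', rfl⟩, ?_⟩
    ext z
    constructor
    · rintro ⟨hz, w, hwW, hwz⟩
      -- w in span, nonzero at z, so some row nonzero at z
      have hrow : ∃ x ∈ S', M x ⟨z, hz⟩ ≠ 0 := by
        by_contra hc
        push_neg at hc
        have hle : Submodule.span K ((fun x => M x) '' S') ≤
            LinearMap.ker (LinearMap.proj (R := K) (φ := fun _ : ↥(Aᶜ) => K) ⟨z, hz⟩) := by
          rw [Submodule.span_le]
          rintro w' ⟨x, hx, rfl⟩
          simpa [LinearMap.mem_ker] using hc x hx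
        exact hwz (by simpa using hle hwW)
      obtain ⟨x, hxS, hxz⟩ := hrow
      have hadj : G.Adj (x : V) z := by
        by_contra hne
        apply hxz
        simp [hM, cutMatrix, hne]
      refine ⟨Set.mem_biUnion hxS ?_, by simpa using hz⟩
      exact hadj
    · rintro ⟨hzN, hzA⟩
      obtain ⟨y, hyY, hzy⟩ := Set.mem_iUnion₂.mp hzN
      have hyA : y ∈ A := hY hyY
      have hz : z ∈ Aᶜ := by simpa using hzA
      refine ⟨hz, M ⟨y, hyA⟩, Submodule.subset_span ⟨⟨y, hyA⟩, hyY, rfl⟩, ?_⟩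
      have hadj : G.Adj y z := hzy
      simp [hM, cutMatrix, hadj]
  have hfin : spans.Finite := Set.toFinite _
  calc unionCount G A ≤ (u '' spans).ncard := Set.ncard_le_ncard key (hfin.image u)
    _ ≤ spans.ncard := Set.ncard_image_le hfin
    _ = nss G A := rfl

lemma nss_le_card (G : SimpleGraph V) (A : Finset V) (r : ℕ) (hr : r = cutRank G A) :
    nss G A ≤ Nat.card (Submodule (ZMod 2) (Fin r → ZMod 2)) := by
  classical
  set K := ZMod 2
  set M : Matrix ↥A ↥(Aᶜ) K := cutMatrix G A with hM
  set R : Submodule K (↥(Aᶜ) → K) := Submodule.span K (Set.range M) with hR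
  have hfr : finrank K ↥R = r := by
    rw [hR, hr]
    exact (Matrix.rank_eq_finrank_span_row M).symm
  haveI : FiniteDimensional K ↥R := inferInstance
  set b : Basis (Fin r) K ↥R := Module.finBasisOfFinrankEq K ↥R hfr with hb
  set e : ↥R ≃ₗ[K] (Fin r → K) := b.equivFun with he
  set ψ : Submodule K (↥(Aᶜ) → K) → Submodule K (Fin r → K) :=
    fun W => Submodule.map (e : ↥R →ₗ[K] (Fin r → K)) (W.comap R.subtype) with hψ
  set spans : Set (Submodule K (↥(Aᶜ) → K)) :=
    {W | ∃ S : Set ↥A, W = Submodule.span K ((fun x => M x) '' S)} with hspans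
  have hle : ∀ W ∈ spans, W ≤ R := by
    rintro W ⟨S, rfl⟩
    rw [hR]
    exact Submodule.span_mono (Set.image_subset_range _ _)
  have hinjOn : Set.InjOn ψ spans := by
    intro W1 h1 W2 h2 hψeq
    have hcomap : W1.comap R.subtype = W2.comap R.subtype :=
      Submodule.map_injective_of_injective e.injective hψeq
    have hmc : ∀ W ∈ spans, Submodule.map R.subtype (W.comap R.subtype) = W := by
      intro W hW
      rw [Submodule.map_comap_subtype]
      exact inf_eq_right.mpr (hle W hW)
    rw [← hmc W1 h1, ← hmc W2 h2, hcomap]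
  have h1 : nss G A = Nat.card ↥spans := (Nat.card_coe_set_eq spans).symm
  rw [h1]
  exact Nat.card_le_card_of_injective (fun w => ψ w.1)
    (fun w1 w2 hw => Subtype.ext (hinjOn w1.2 w2.2 hw))

end MainAux

/-- if `r = ρ_G(A) ≥ 1` then `U_G(A) ≤ r · 2^((r² + 5r)/4)`
as an inequality of real numbers (equivalently
`β_G(A) ≤ ρ_G(A)²/4 + 5ρ_G(A)/4 + log₂ ρ_G(A)`). -/
theorem unionCount_le_of_cutRank {V : Type*} [Fintype V] [DecidableEq V]
    (G : SimpleGraph V) (A : Finset V) (r : ℕ) (hr : r = cutRank G A) (hr1 : 1 ≤ r) :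
    (unionCount G A : ℝ) ≤ (r : ℝ) * (2 : ℝ) ^ ((((r : ℝ)) ^ 2 + 5 * (r : ℝ)) / 4) := by
  classical
  have hnat : unionCount G A ≤ 2 ^ r * 2 ^ (r ^ 2 / 4) := by
    refine (unionCount_le_nss G A).trans ((nss_le_card G A r hr).trans ?_)
    have := card_submodule_le (K := ZMod 2) (ι := Fin r)
    simpa [Fintype.card_fin, ZMod.card] using this
  have hcast : (unionCount G A : ℝ) ≤ (2 : ℝ) ^ ((r + r ^ 2 / 4 : ℕ) : ℝ) := by
    rw [Real.rpow_natCast]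
    calc (unionCount G A : ℝ) ≤ ((2 ^ r * 2 ^ (r ^ 2 / 4) : ℕ) : ℝ) := by exact_mod_cast hnat
    _ = (2 : ℝ) ^ (r + r ^ 2 / 4) := by push_cast [pow_add]; ring
  refine hcast.trans ?_
  have hexp : ((r + r ^ 2 / 4 : ℕ) : ℝ) ≤ (((r : ℝ)) ^ 2 + 5 * (r : ℝ)) / 4 := by
    have h1 : ((r ^ 2 / 4 : ℕ) : ℝ) ≤ ((r ^ 2 : ℕ) : ℝ) / ((4 : ℕ) : ℝ) := Nat.cast_div_le
    have h2 : (r : ℝ) ≤ 5 * (r : ℝ) / 4 := by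
      have : (0 : ℝ) ≤ (r : ℝ) := Nat.cast_nonneg r
      linarith
    push_cast at h1 ⊢
    linarith
  have hmono : (2 : ℝ) ^ ((r + r ^ 2 / 4 : ℕ) : ℝ) ≤
      (2 : ℝ) ^ ((((r : ℝ)) ^ 2 + 5 * (r : ℝ)) / 4) :=
    Real.rpow_le_rpow_of_exponent_le (by norm_num) hexp
  refine hmono.trans ?_
  have hrpos : (1 : ℝ) ≤ (r : ℝ) := by exact_mod_cast hr1
  nlinarith [Real.rpow_pos_of_pos (by norm_num : (0:ℝ) < 2) ((((r : ℝ)) ^ 2 + 5 * (r : ℝ)) / 4)]
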